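/- For every n ≥ 1 and every triple H, K₁, K₂ of Hermitian n×n complex matrices, the function f : ℝ × ℝ → ℝ defined by f(x, y) = Real.log (Re (Matrix.trace (Matrix.exp (H + x • K₁ + y • K₂)))) is convex on ℝ². (This is the finite-dimensional core of the paper's Lemma 5(i): the pressure function p̃(ν) = β⁻¹ log Tr exp(β(μn − h + ν a* + ν̄ a)) is convex in ν, proved via positive-definiteness of its Hessian.) -/

import Mathlib

lemma exp_diag_real {n : ℕ} (r : Fin n → ℝ) :
    NormedSpace.exp (Matrix.diagonal fun j => (r j : ℂ)) =
      Matrix.diagonal (fun j => (Real.exp (r j) : ℂ)) := by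
  rw [Matrix.exp_diagonal, Pi.exp_def]
  simp only [← Complex.exp_eq_exp_ℂ, ← Complex.ofReal_exp]

lemma conj_diag_entry {n : ℕ} (U : Matrix (Fin n) (Fin n) ℂ) (r : Fin n → ℝ) (i : Fin n) :
    ((U * Matrix.diagonal (fun j => (r j : ℂ)) * star U) i i).re
      = ∑ j, Complex.normSq (U i j) * r j := by
  rw [Matrix.mul_apply, Complex.re_sum]
  refine Finset.sum_congr rfl fun j _ => ?_
  rw [Matrix.mul_diagonal, Matrix.star_apply]
  have h : U i j * (r j : ℂ) * star (U i j) = (r j : ℂ) * (U i j * star (U i j)) := by ring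
  rw [h, Complex.star_def, Complex.mul_conj]
  simp [mul_comm]

lemma unitary_row_sum {n : ℕ} {U : Matrix (Fin n) (Fin n) ℂ} (hU : U * star U = 1) (i : Fin n) :
    ∑ j, Complex.normSq (U i j) = 1 := by
  have h := congrFun (congrFun hU i) i
  rw [Matrix.mul_apply] at h
  have h' := congrArg Complex.re h
  rw [Complex.re_sum] at h'
  simpa [Matrix.star_apply, Complex.star_def, Complex.mul_conj, Matrix.one_apply] using h'

lemma exp_hermitian {n : ℕ} {A : Matrix (Fin n) (Fin n) ℂ} (hA : A.IsHermitian) :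
    NormedSpace.exp A =
      (hA.eigenvectorUnitary : Matrix (Fin n) (Fin n) ℂ) *
        Matrix.diagonal (fun j => (Real.exp (hA.eigenvalues j) : ℂ)) *
        star (hA.eigenvectorUnitary : Matrix (Fin n) (Fin n) ℂ) := by
  set U := (hA.eigenvectorUnitary : Matrix (Fin n) (Fin n) ℂ) with hUdef
  have hU1 : U * star U = 1 := Matrix.mem_unitaryGroup_iff.mp hA.eigenvectorUnitary.2
  have hU2 : star U * U = 1 := Matrix.mem_unitaryGroup_iff'.mp hA.eigenvectorUnitary.2
  have hUnit : IsUnit U := ⟨⟨U, star U, hU1, hU2⟩, rfl⟩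
  have hUinv : U⁻¹ = star U := Matrix.inv_eq_right_inv hU1
  have hdiag : Matrix.diagonal ((RCLike.ofReal : ℝ → ℂ) ∘ hA.eigenvalues)
      = Matrix.diagonal (fun j => ((hA.eigenvalues j : ℝ) : ℂ)) := rfl
  conv_lhs => rw [hA.spectral_theorem, Unitary.conjStarAlgAut_apply, ← hUinv]
  rw [Matrix.exp_conj U _ hUnit, hUinv, hdiag, exp_diag_real]

lemma trace_exp_hermitian {n : ℕ} {A : Matrix (Fin n) (Fin n) ℂ} (hA : A.IsHermitian) :
    (Matrix.trace (NormedSpace.exp A)).re = ∑ i, Real.exp (hA.eigenvalues i) := by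
  have hU2 : star (hA.eigenvectorUnitary : Matrix (Fin n) (Fin n) ℂ) *
      (hA.eigenvectorUnitary : Matrix (Fin n) (Fin n) ℂ) = 1 :=
    Matrix.mem_unitaryGroup_iff'.mp hA.eigenvectorUnitary.2
  rw [exp_hermitian hA, Matrix.trace_mul_cycle, hU2, Matrix.one_mul,
    Matrix.trace_diagonal, Complex.re_sum]
  simp [Complex.exp_ofReal_re]

lemma peierls {n : ℕ} {A : Matrix (Fin n) (Fin n) ℂ} (hA : A.IsHermitian) :
    ∑ i, Real.exp ((A i i).re) ≤ (Matrix.trace (NormedSpace.exp A)).re := by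
  set U := (hA.eigenvectorUnitary : Matrix (Fin n) (Fin n) ℂ) with hUdef
  have hU1 : U * star U = 1 := Matrix.mem_unitaryGroup_iff.mp hA.eigenvectorUnitary.2
  set lam := hA.eigenvalues with hlam
  have hAentry : ∀ i, (A i i).re = ∑ j, Complex.normSq (U i j) * lam j := by
    intro i
    conv_lhs => rw [hA.spectral_theorem, Unitary.conjStarAlgAut_apply]
    exact conj_diag_entry U lam i
  have hexp : (Matrix.trace (NormedSpace.exp A)).re
      = ∑ i, ∑ j, Complex.normSq (U i j) * Real.exp (lam j) := by
    rw [exp_hermitian hA, Matrix.trace, Complex.re_sum]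
    exact Finset.sum_congr rfl fun i _ => conj_diag_entry U (fun j => Real.exp (lam j)) i
  rw [hexp]
  refine Finset.sum_le_sum fun i _ => ?_
  rw [hAentry i]
  have hw : ∀ j ∈ Finset.univ, (0 : ℝ) ≤ Complex.normSq (U i j) :=
    fun j _ => Complex.normSq_nonneg _
  have hsum : ∑ j, Complex.normSq (U i j) = 1 := unitary_row_sum hU1 i
  have := convexOn_exp.map_sum_le (t := Finset.univ) (w := fun j => Complex.normSq (U i j))
    (p := lam) hw hsum (fun j _ => Set.mem_univ _)
  simpa [smul_eq_mul] using this

lemma holder_sum_exp {n : ℕ} (hn : 1 ≤ n) {a b : ℝ} (ha : 0 ≤ a) (hb : 0 ≤ b)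
    (hab : a + b = 1) (x y : Fin n → ℝ) :
    ∑ i, Real.exp (a * x i + b * y i) ≤
      (∑ i, Real.exp (x i)) ^ a * (∑ i, Real.exp (y i)) ^ b := by
  have : Nonempty (Fin n) := Fin.pos_iff_nonempty.mp hn
  set X := ∑ i, Real.exp (x i) with hX
  set Y := ∑ i, Real.exp (y i) with hY
  have hXpos : 0 < X := Finset.sum_pos (fun i _ => Real.exp_pos _) Finset.univ_nonempty
  have hYpos : 0 < Y := Finset.sum_pos (fun i _ => Real.exp_pos _) Finset.univ_nonempty
  rw [← div_le_one (by positivity), Finset.sum_div]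
  have key : ∀ i : Fin n, Real.exp (a * x i + b * y i) / (X ^ a * Y ^ b)
      ≤ a * (Real.exp (x i) / X) + b * (Real.exp (y i) / Y) := by
    intro i
    have h1 : Real.exp (a * x i + b * y i) / (X ^ a * Y ^ b)
        = (Real.exp (x i) / X) ^ a * (Real.exp (y i) / Y) ^ b := by
      rw [Real.div_rpow (Real.exp_pos _).le hXpos.le,
        Real.div_rpow (Real.exp_pos _).le hYpos.le, Real.exp_add,
        mul_comm a (x i), mul_comm b (y i), Real.exp_mul, Real.exp_mul]
      ring
    rw [h1]
    exact Real.geom_mean_le_arith_mean2_weighted ha hb (by positivity) (by positivity) hab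
  calc ∑ i, Real.exp (a * x i + b * y i) / (X ^ a * Y ^ b)
      ≤ ∑ i : Fin n, (a * (Real.exp (x i) / X) + b * (Real.exp (y i) / Y)) :=
        Finset.sum_le_sum fun i _ => key i
    _ = 1 := by
        rw [Finset.sum_add_distrib, ← Finset.mul_sum, ← Finset.mul_sum,
          ← Finset.sum_div, ← Finset.sum_div, ← hX, ← hY, div_self hXpos.ne',
          div_self hYpos.ne', mul_one, mul_one, hab]


set_option maxHeartbeats 1000000 in
/-- **Convexity of the pressure function** (finite-dimensional core of Lemma 5(i)).
For every `n ≥ 1` and Hermitian `n × n` complex matrices `H`, `K₁`, `K₂`, the function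
`(x, y) ↦ log (Re (Tr (exp (H + x • K₁ + y • K₂))))` is convex on `ℝ²`. -/
theorem pressure_convex {n : ℕ} (hn : 1 ≤ n)
    (H K₁ K₂ : Matrix (Fin n) (Fin n) ℂ)
    (hH : H.IsHermitian) (hK₁ : K₁.IsHermitian) (hK₂ : K₂.IsHermitian) :
    ConvexOn ℝ Set.univ (fun p : ℝ × ℝ =>
      Real.log ((Matrix.trace (NormedSpace.exp (H + p.1 • K₁ + p.2 • K₂))).re)) := by
  have hne : Nonempty (Fin n) := Fin.pos_iff_nonempty.mp hn
  have hMherm : ∀ r : ℝ × ℝ, (H + r.1 • K₁ + r.2 • K₂).IsHermitian := by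
    intro r
    refine Matrix.IsHermitian.add (Matrix.IsHermitian.add hH ?_) ?_
    · unfold Matrix.IsHermitian
      rw [Matrix.conjTranspose_smul, star_trivial, hK₁]
    · unfold Matrix.IsHermitian
      rw [Matrix.conjTranspose_smul, star_trivial, hK₂]
  refine ⟨convex_univ, ?_⟩
  intro p _ q _ a b ha hb hab
  dsimp only
  simp only [smul_eq_mul]
  -- the combined matrix
  have hcomb : H + (a • p + b • q).1 • K₁ + (a • p + b • q).2 • K₂
      = a • (H + p.1 • K₁ + p.2 • K₂) + b • (H + q.1 • K₁ + q.2 • K₂) := by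
    have h1 : a • (H + p.1 • K₁ + p.2 • K₂) + b • (H + q.1 • K₁ + q.2 • K₂)
        = (a + b) • H + (a * p.1 + b * q.1) • K₁ + (a * p.2 + b * q.2) • K₂ := by
      module
    rw [h1, hab, one_smul]
    simp only [Prod.fst_add, Prod.snd_add, Prod.smul_fst, Prod.smul_snd, smul_eq_mul]
  set N := a • (H + p.1 • K₁ + p.2 • K₂) + b • (H + q.1 • K₁ + q.2 • K₂) with hNdef
  have hN : N.IsHermitian := hcomb ▸ hMherm (a • p + b • q)
  set V := (hN.eigenvectorUnitary : Matrix (Fin n) (Fin n) ℂ) with hVdef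
  have hV1 : V * star V = 1 := Matrix.mem_unitaryGroup_iff.mp hN.eigenvectorUnitary.2
  have hV2 : star V * V = 1 := Matrix.mem_unitaryGroup_iff'.mp hN.eigenvectorUnitary.2
  have hVunit : IsUnit V := ⟨⟨V, star V, hV1, hV2⟩, rfl⟩
  have hVinv : V⁻¹ = star V := Matrix.inv_eq_right_inv hV1
  set lam := hN.eigenvalues with hlamdef
  set x : Fin n → ℝ := fun i => ((star V * (H + p.1 • K₁ + p.2 • K₂) * V) i i).re with hxdef
  set y : Fin n → ℝ := fun i => ((star V * (H + q.1 • K₁ + q.2 • K₂) * V) i i).re with hydef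
  -- eigenvalues of N are convex combinations of diagonal entries
  have hlam : ∀ i, lam i = a * x i + b * y i := by
    intro i
    have hdiag := (Unitary.conjStarAlgAut_star_apply _ _).symm.trans hN.conjStarAlgAut_star_eigenvectorUnitary
    have h := congrArg Complex.re (congrFun (congrFun hdiag i) i)
    rw [Matrix.diagonal_apply_eq] at h
    have hsplit : star V * N * V
        = a • (star V * (H + p.1 • K₁ + p.2 • K₂) * V)
          + b • (star V * (H + q.1 • K₁ + q.2 • K₂) * V) := by
      rw [hNdef]
      rw [Matrix.mul_add, Matrix.add_mul, Matrix.mul_smul, Matrix.smul_mul,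
        Matrix.mul_smul, Matrix.smul_mul]
    rw [hsplit] at h
    simp only [Matrix.add_apply, Matrix.smul_apply, Complex.add_re, Complex.real_smul,
      Complex.re_ofReal_mul, Function.comp_apply, Complex.ofReal_re] at h
    exact h.symm
  -- Peierls for p and q
  have hpeierls : ∀ (r : ℝ × ℝ),
      ∑ i, Real.exp (((star V * (H + r.1 • K₁ + r.2 • K₂) * V) i i).re)
        ≤ (Matrix.trace (NormedSpace.exp (H + r.1 • K₁ + r.2 • K₂))).re := by
    intro r
    set A := H + r.1 • K₁ + r.2 • K₂ with hAdef
    have hA : A.IsHermitian := hMherm r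
    have hconj : (star V * A * V).IsHermitian := by
      have := Matrix.isHermitian_mul_mul_conjTranspose (star V) hA
      simpa [Matrix.star_eq_conjTranspose, Matrix.conjTranspose_conjTranspose] using this
    have htr : Matrix.trace (NormedSpace.exp (star V * A * V))
        = Matrix.trace (NormedSpace.exp A) := by
      rw [← hVinv, Matrix.exp_conj' V A hVunit, hVinv, Matrix.trace_mul_cycle,
        hV1, Matrix.one_mul]
    calc ∑ i, Real.exp (((star V * A * V) i i).re)
        ≤ (Matrix.trace (NormedSpace.exp (star V * A * V))).re := peierls hconj
      _ = (Matrix.trace (NormedSpace.exp A)).re := by rw [htr]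
  have hxle := hpeierls p
  have hyle := hpeierls q
  -- positivity
  have hSx : (0:ℝ) < ∑ i, Real.exp (x i) :=
    Finset.sum_pos (fun i _ => Real.exp_pos _) Finset.univ_nonempty
  have hSy : (0:ℝ) < ∑ i, Real.exp (y i) :=
    Finset.sum_pos (fun i _ => Real.exp_pos _) Finset.univ_nonempty
  have hTp : (0:ℝ) < (Matrix.trace (NormedSpace.exp (H + p.1 • K₁ + p.2 • K₂))).re :=
    lt_of_lt_of_le hSx hxle
  have hTq : (0:ℝ) < (Matrix.trace (NormedSpace.exp (H + q.1 • K₁ + q.2 • K₂))).re :=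
    lt_of_lt_of_le hSy hyle
  -- main chain
  have hval : (Matrix.trace (NormedSpace.exp
      (H + (a • p + b • q).1 • K₁ + (a • p + b • q).2 • K₂))).re = ∑ i, Real.exp (lam i) := by
    rw [hcomb]
    exact trace_exp_hermitian hN
  rw [hval]
  have hstep1 : ∑ i, Real.exp (lam i)
      ≤ (∑ i, Real.exp (x i)) ^ a * (∑ i, Real.exp (y i)) ^ b := by
    calc ∑ i, Real.exp (lam i) = ∑ i, Real.exp (a * x i + b * y i) := by
          exact Finset.sum_congr rfl fun i _ => by rw [hlam i]
      _ ≤ _ := holder_sum_exp hn ha hb hab x y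
  calc Real.log (∑ i, Real.exp (lam i))
      ≤ Real.log ((∑ i, Real.exp (x i)) ^ a * (∑ i, Real.exp (y i)) ^ b) :=
        Real.log_le_log (Finset.sum_pos (fun i _ => Real.exp_pos _) Finset.univ_nonempty) hstep1
    _ = a * Real.log (∑ i, Real.exp (x i)) + b * Real.log (∑ i, Real.exp (y i)) := by
        rw [Real.log_mul (Real.rpow_pos_of_pos hSx a).ne' (Real.rpow_pos_of_pos hSy b).ne',
          Real.log_rpow hSx, Real.log_rpow hSy]
    _ ≤ a * Real.log ((Matrix.trace (NormedSpace.exp (H + p.1 • K₁ + p.2 • K₂))).re)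
        + b * Real.log ((Matrix.trace (NormedSpace.exp (H + q.1 • K₁ + q.2 • K₂))).re) := by
        exact add_le_add (mul_le_mul_of_nonneg_left (Real.log_le_log hSx hxle) ha)
          (mul_le_mul_of_nonneg_left (Real.log_le_log hSy hyle) hb)
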